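/- For a monoid S: (i) every retract of an InC-injective right S-act is InC-injective; (ii) every coproduct of InC-injective right S-acts is InC-injective if and only if S is left reversible. -/

import Mathlib

universe u

/-- A right `S`-act structure on a nonempty type `A`: a right action of the monoid `S`. -/
class RightAct (S : Type u) [Monoid S] (A : Type u) : Type u where
  act : A → S → A
  act_one : ∀ a : A, act a 1 = a
  act_mul : ∀ (a : A) (s t : S), act (act a s) t = act a (s * t)
  nonempty : Nonempty A

infixl:70 " ⊛ " => RightAct.act

/-- `S` is left reversible: every two right ideals (equiv. principal ones) intersect. -/
def LeftReversible (S : Type u) [Monoid S] : Prop :=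
  ∀ a b : S, ∃ u v : S, a * u = b * v

/-- A left zero element of the monoid `S`. -/
def IsLeftZero (S : Type u) [Monoid S] (z : S) : Prop :=
  ∀ s : S, z * s = z

/-- `f : A → B` is a homomorphism of right `S`-acts. -/
def IsActHom (S : Type u) [Monoid S] {A B : Type u} [RightAct S A] [RightAct S B]
    (f : A → B) : Prop :=
  ∀ (a : A) (s : S), f (a ⊛ s) = f a ⊛ s

/-- The restriction of `f : A → B` to the subset `C` is a homomorphism of right `S`-acts. -/
def IsActHomOn (S : Type u) [Monoid S] {A B : Type u} [RightAct S A] [RightAct S B]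
    (f : A → B) (C : Set A) : Prop :=
  ∀ a ∈ C, ∀ s : S, f (a ⊛ s) = f a ⊛ s

/-- A subact: a nonempty subset closed under the action. -/
def IsSubact (S : Type u) [Monoid S] {A : Type u} [RightAct S A] (C : Set A) : Prop :=
  C.Nonempty ∧ ∀ a ∈ C, ∀ s : S, a ⊛ s ∈ C

/-- A zero element of an act: fixed by the action of every `s ∈ S`. -/
def IsZeroElem (S : Type u) [Monoid S] {A : Type u} [RightAct S A] (θ : A) : Prop :=
  ∀ s : S, θ ⊛ s = θ

/-- A subset `D` (viewed as an act) is decomposable: it is the disjoint union of two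
nonempty subacts. -/
def DecomposableSet (S : Type u) [Monoid S] {A : Type u} [RightAct S A] (D : Set A) : Prop :=
  ∃ B C : Set A, IsSubact S B ∧ IsSubact S C ∧ B ∪ C = D ∧ B ∩ C = ∅

/-- A subset (viewed as an act) is indecomposable. -/
def IndecomposableSet (S : Type u) [Monoid S] {A : Type u} [RightAct S A] (D : Set A) : Prop :=
  ¬ DecomposableSet S D

/-- The act `A` is decomposable. -/
def Decomposable (S : Type u) [Monoid S] (A : Type u) [RightAct S A] : Prop :=
  DecomposableSet S (Set.univ : Set A)

/-- The act `A` is indecomposable. -/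
def Indecomposable (S : Type u) [Monoid S] (A : Type u) [RightAct S A] : Prop :=
  ¬ Decomposable S A

/-- A cyclic act: generated by a single element. -/
def CyclicAct (S : Type u) [Monoid S] (A : Type u) [RightAct S A] : Prop :=
  ∃ a : A, ∀ x : A, ∃ s : S, x = a ⊛ s

/-- `A` is a retract of `B`. -/
def IsRetractOf (S : Type u) [Monoid S] (A B : Type u) [RightAct S A] [RightAct S B] : Prop :=
  ∃ (i : A → B) (p : B → A), IsActHom S i ∧ IsActHom S p ∧ ∀ a : A, p (i a) = a

/-- `Q` is an injective act: every homomorphism from a subact `C` of any act `B` into `Q`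
extends to `B`. -/
def ActInjective (S : Type u) [Monoid S] (Q : Type u) [RightAct S Q] : Prop :=
  ∀ (B : Type u) [RightAct S B], ∀ C : Set B, IsSubact S C →
    ∀ f : B → Q, IsActHomOn S f C →
      ∃ g : B → Q, IsActHom S g ∧ Set.EqOn g f C

/-- `Q` is InC-injective: injective relative to all embeddings into indecomposable acts. -/
def InCInjective (S : Type u) [Monoid S] (Q : Type u) [RightAct S Q] : Prop :=
  ∀ (B : Type u) [RightAct S B], Indecomposable S B → ∀ C : Set B, IsSubact S C →
    ∀ f : B → Q, IsActHomOn S f C →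
      ∃ g : B → Q, IsActHom S g ∧ Set.EqOn g f C

/-- `Q` is InD-injective: injective relative to all embeddings of indecomposable acts. -/
def InDInjective (S : Type u) [Monoid S] (Q : Type u) [RightAct S Q] : Prop :=
  ∀ (B : Type u) [RightAct S B], ∀ C : Set B, IsSubact S C → IndecomposableSet S C →
    ∀ f : B → Q, IsActHomOn S f C →
      ∃ g : B → Q, IsActHom S g ∧ Set.EqOn g f C

/-- `Q` is PInD-injective: every monomorphism from an indecomposable subact extends. -/
def PInDInjective (S : Type u) [Monoid S] (Q : Type u) [RightAct S Q] : Prop :=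
  ∀ (B : Type u) [RightAct S B], ∀ C : Set B, IsSubact S C → IndecomposableSet S C →
    ∀ f : B → Q, IsActHomOn S f C → Set.InjOn f C →
      ∃ g : B → Q, IsActHom S g ∧ Set.EqOn g f C

/-- `A` is quasi injective: homomorphisms from subacts of `A` to `A` extend to `A`. -/
def QuasiInjective (S : Type u) [Monoid S] (A : Type u) [RightAct S A] : Prop :=
  ∀ C : Set A, IsSubact S C → ∀ f : A → A, IsActHomOn S f C →
    ∃ g : A → A, IsActHom S g ∧ Set.EqOn g f C

/-- `A` is pseudo injective: monomorphisms from subacts of any act into `A` extend. -/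
def PseudoInjective (S : Type u) [Monoid S] (A : Type u) [RightAct S A] : Prop :=
  ∀ (C : Type u) [RightAct S C], ∀ B : Set C, IsSubact S B →
    ∀ f : C → A, IsActHomOn S f B → Set.InjOn f B →
      ∃ g : C → A, IsActHom S g ∧ Set.EqOn g f B

/-- A subact `Q` of `A` (viewed as an act in its own right) is injective. -/
def ActInjectiveSet (S : Type u) [Monoid S] {A : Type u} [RightAct S A] (Q : Set A) : Prop :=
  ∀ (B : Type u) [RightAct S B], ∀ C : Set B, IsSubact S C →
    ∀ f : B → A, IsActHomOn S f C → (∀ c ∈ C, f c ∈ Q) →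
      ∃ g : B → A, IsActHom S g ∧ (∀ b : B, g b ∈ Q) ∧ Set.EqOn g f C

/-- A subact `Q` of `A` (viewed as an act in its own right) is InD-injective. -/
def InDInjectiveSet (S : Type u) [Monoid S] {A : Type u} [RightAct S A] (Q : Set A) : Prop :=
  ∀ (B : Type u) [RightAct S B], ∀ C : Set B, IsSubact S C → IndecomposableSet S C →
    ∀ f : B → A, IsActHomOn S f C → (∀ c ∈ C, f c ∈ Q) →
      ∃ g : B → A, IsActHom S g ∧ (∀ b : B, g b ∈ Q) ∧ Set.EqOn g f C

/-- A subact `Q` of `A` (viewed as an act in its own right) is PInD-injective. -/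
def PInDInjectiveSet (S : Type u) [Monoid S] {A : Type u} [RightAct S A] (Q : Set A) : Prop :=
  ∀ (B : Type u) [RightAct S B], ∀ C : Set B, IsSubact S C → IndecomposableSet S C →
    ∀ f : B → A, IsActHomOn S f C → Set.InjOn f C → (∀ c ∈ C, f c ∈ Q) →
      ∃ g : B → A, IsActHom S g ∧ (∀ b : B, g b ∈ Q) ∧ Set.EqOn g f C

/-- The monoid `S` as a right act over itself, by multiplication. -/
instance selfAct (S : Type u) [Monoid S] : RightAct S S where
  act a s := a * s
  act_one := mul_one
  act_mul a s t := mul_assoc a s t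
  nonempty := ⟨1⟩

/-- `Q` is weakly injective: homomorphisms from right ideals of `S` into `Q` extend to `S`. -/
def WeaklyInjective (S : Type u) [Monoid S] (Q : Type u) [RightAct S Q] : Prop :=
  ∀ I : Set S, IsSubact S I → ∀ f : S → Q, IsActHomOn S f I →
    ∃ g : S → Q, IsActHom S g ∧ Set.EqOn g f I

/-- The relation whose equivalence closure has the indecomposable components as classes. -/
def ActRel (S : Type u) [Monoid S] {A : Type u} [RightAct S A] (a b : A) : Prop :=
  ∃ s : S, b = a ⊛ s

/-- The indecomposable component of the element `a` of an act. -/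
def ActComponent (S : Type u) [Monoid S] {A : Type u} [RightAct S A] (a : A) : Set A :=
  {b | Relation.EqvGen (ActRel S) a b}

/-- The coproduct (disjoint union) of a family of acts. -/
instance sigmaAct (S : Type u) [Monoid S] {I : Type u} [Nonempty I] (A : I → Type u)
    [∀ i, RightAct S (A i)] : RightAct S (Σ i, A i) where
  act x s := ⟨x.1, x.2 ⊛ s⟩
  act_one x := by cases x; simp [RightAct.act_one]
  act_mul x s t := by cases x; simp [RightAct.act_mul]
  nonempty := ⟨⟨Classical.arbitrary I, Classical.choice (RightAct.nonempty (S := S))⟩⟩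


/- ### Auxiliary lemmas -/

instance punitAct (S : Type u) [Monoid S] : RightAct S PUnit where
  act _ _ := PUnit.unit
  act_one a := by cases a; rfl
  act_mul _ _ _ := rfl
  nonempty := ⟨PUnit.unit⟩

lemma punit_inCInjective (S : Type u) [Monoid S] : InCInjective S (PUnit.{u+1}) := by
  intro B _ _ C _ f _
  refine ⟨fun _ => PUnit.unit, fun a s => rfl, fun c _ => ?_⟩
  cases f c; rfl

/-- The monoid as a right act over itself is indecomposable. -/
lemma self_indecomposable (S : Type u) [Monoid S] : Indecomposable S S := by
  rintro ⟨B, C, hB, hC, hU, hD⟩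
  have h1 : (1 : S) ∈ B ∪ C := by rw [hU]; trivial
  rcases h1 with h1 | h1
  · obtain ⟨c, hc⟩ := hC.1
    have : (1 : S) ⊛ c ∈ B := hB.2 1 h1 c
    have hcB : c ∈ B := by simpa [RightAct.act, one_mul] using this
    have : c ∈ B ∩ C := ⟨hcB, hc⟩
    simp [hD] at this
  · obtain ⟨b, hb⟩ := hB.1
    have : (1 : S) ⊛ b ∈ C := hC.2 1 h1 b
    have hbC : b ∈ C := by simpa [RightAct.act, one_mul] using this
    have : b ∈ B ∩ C := ⟨hb, hbC⟩
    simp [hD] at this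

/-- In an indecomposable act over a left reversible monoid, any two elements have a
common "descendant". -/
lemma indecomposable_common (S : Type u) [Monoid S] (hrev : LeftReversible S)
    (B : Type u) [RightAct S B] (hind : Indecomposable S B) :
    ∀ a b : B, ∃ s t : S, a ⊛ s = b ⊛ t := by
  -- the relation `R a b := ∃ s t, a ⊛ s = b ⊛ t` is transitive by left reversibility
  set R : B → B → Prop := fun a b => ∃ s t : S, a ⊛ s = b ⊛ t with hR
  have hrefl : ∀ a, R a a := fun a => ⟨1, 1, rfl⟩
  have hsymm : ∀ {a b}, R a b → R b a := by rintro a b ⟨s, t, h⟩; exact ⟨t, s, h.symm⟩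
  have htrans : ∀ {a b c}, R a b → R b c → R a c := by
    rintro a b c ⟨s, t, h1⟩ ⟨s', t', h2⟩
    obtain ⟨u, v, huv⟩ := hrev t s'
    refine ⟨s * u, t' * v, ?_⟩
    calc a ⊛ (s * u) = (a ⊛ s) ⊛ u := (RightAct.act_mul a s u).symm
      _ = (b ⊛ t) ⊛ u := by rw [h1]
      _ = b ⊛ (t * u) := RightAct.act_mul b t u
      _ = b ⊛ (s' * v) := by rw [huv]
      _ = (b ⊛ s') ⊛ v := (RightAct.act_mul b s' v).symm
      _ = (c ⊛ t') ⊛ v := by rw [h2]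
      _ = c ⊛ (t' * v) := RightAct.act_mul c t' v
  have hclosed : ∀ {a b : B} (s : S), R a b → R a (b ⊛ s) := by
    rintro a b s ⟨u, v, h⟩
    obtain ⟨p, q, hpq⟩ := hrev v s
    refine ⟨u * p, q, ?_⟩
    calc a ⊛ (u * p) = (a ⊛ u) ⊛ p := (RightAct.act_mul a u p).symm
      _ = (b ⊛ v) ⊛ p := by rw [h]
      _ = b ⊛ (v * p) := RightAct.act_mul b v p
      _ = b ⊛ (s * q) := by rw [hpq]
      _ = (b ⊛ s) ⊛ q := (RightAct.act_mul b s q).symm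
  -- each class is a subact; if some a is not related to all, decompose B
  intro a b
  by_contra hab
  apply hind
  refine ⟨{x | R a x}, {x | ¬ R a x}, ⟨⟨a, hrefl a⟩, ?_⟩, ⟨⟨b, fun h => hab ?_⟩, ?_⟩, ?_, ?_⟩
  · exact fun x hx s => hclosed s hx
  · exact h
  · intro x hx s hxs
    exact hx (htrans hxs (hsymm ⟨s, 1, (RightAct.act_one (x ⊛ s)).symm⟩))
  · ext x; by_cases h : R a x <;> simp [h]
  · ext x; by_cases h : R a x <;> simp [h]

lemma cast_act {S : Type u} [Monoid S] {I : Type u} {A : I → Type u}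
    [∀ i, RightAct S (A i)] {i j : I} (h : i = j) (a : A i) (s : S) :
    (h ▸ (a ⊛ s) : A j) = (h ▸ a : A j) ⊛ s := by subst h; rfl

lemma sigma_eta {I : Type u} {A : I → Type u} (x : Σ i, A i) {i₀ : I} (h : x.1 = i₀) :
    (⟨i₀, h ▸ x.2⟩ : Σ i, A i) = x := by
  obtain ⟨i, a⟩ := x; cases h; rfl

lemma sigma_act_cast {S : Type u} [Monoid S] {I : Type u} [Nonempty I] {A : I → Type u}
    [∀ i, RightAct S (A i)] {i₀ : I} (x y : Σ i, A i) (s : S)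
    (hxy : y = x ⊛ s) (hx : x.1 = i₀) (hy : y.1 = i₀) :
    (hy ▸ y.2 : A i₀) = (hx ▸ x.2) ⊛ s := by
  obtain ⟨i, a⟩ := x
  subst hx
  subst hxy
  rfl

/-- (i) retracts of InC-injective acts are InC-injective; (ii) all
coproducts of InC-injective acts are InC-injective iff `S` is left reversible. -/
theorem retract_and_coproduct_inCInjective (S : Type u) [Monoid S] :
    (∀ (A B : Type u) [RightAct S A] [RightAct S B],
        InCInjective S B → IsRetractOf S A B → InCInjective S A) ∧
    ((∀ (I : Type u) [Nonempty I] (A : I → Type u) [∀ i, RightAct S (A i)],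
        (∀ i, InCInjective S (A i)) → InCInjective S (Σ i, A i)) ↔
      LeftReversible S) := by
  constructor
  · -- (i) retracts
    rintro A B _ _ hB ⟨i, p, hi, hp, hpi⟩ X _ hXind C hC f hf
    obtain ⟨g, hg, hgf⟩ := hB X hXind C hC (fun x => i (f x)) (by
      intro c hc s; simp only []; rw [hf c hc s, hi])
    refine ⟨fun x => p (g x), fun x s => by simp only []; rw [hg, hp], fun c hc => ?_⟩
    have := hgf hc
    simp only [] at this ⊢
    rw [this, hpi]
  constructor
  · -- (ii) ⇒ : coproducts InC-injective implies left reversible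
    intro hcop a b
    by_contra hne
    push_neg at hne
    have hinj := hcop (ULift Bool) (fun _ => PUnit)
      (fun _ => punit_inCInjective S)
    set Θ := Σ _ : ULift Bool, PUnit.{u+1} with hΘ
    set C : Set S := {x | (∃ u, x = a * u) ∨ ∃ v, x = b * v} with hCdef
    have hC : IsSubact S C := by
      constructor
      · exact ⟨a, Or.inl ⟨1, (mul_one a).symm⟩⟩
      · rintro x (⟨u, rfl⟩ | ⟨v, rfl⟩) s
        · exact Or.inl ⟨u * s, by exact mul_assoc a u s⟩
        · exact Or.inr ⟨v * s, by exact mul_assoc b v s⟩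
    classical
    set f : S → Θ := fun x => if ∃ u, x = a * u then ⟨⟨false⟩, PUnit.unit⟩
      else ⟨⟨true⟩, PUnit.unit⟩ with hfdef
    have hact : ∀ (θ : Θ) (s : S), θ ⊛ s = θ := by
      rintro ⟨i, ⟨⟩⟩ s; rfl
    have hfC : IsActHomOn S f C := by
      rintro c hc s
      rw [hact]
      show f (c * s) = f c
      rcases hc with ⟨u, rfl⟩ | ⟨v, rfl⟩
      · have h1 : ∃ w, a * u = a * w := ⟨u, rfl⟩
        have h2 : ∃ w, a * u * s = a * w := ⟨u * s, mul_assoc a u s⟩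
        simp only [hfdef, if_pos h1, if_pos h2]
      · have h1 : ¬ ∃ w, b * v = a * w := by
          rintro ⟨w, hw⟩; exact hne w v hw.symm
        have h2 : ¬ ∃ w, b * v * s = a * w := by
          rintro ⟨w, hw⟩
          exact hne w (v * s) (by rw [← mul_assoc]; exact hw.symm)
        simp only [hfdef, if_neg h1, if_neg h2]
    obtain ⟨g, hg, hgf⟩ := hinj S (self_indecomposable S) C hC f hfC
    have haC : a ∈ C := Or.inl ⟨1, (mul_one a).symm⟩
    have hbC : b ∈ C := Or.inr ⟨1, (mul_one b).symm⟩
    have hga : g a = g 1 := by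
      have : g ((1 : S) ⊛ a) = g 1 ⊛ a := hg 1 a
      rw [show ((1 : S) ⊛ a) = a from one_mul a, hact] at this
      exact this
    have hgb : g b = g 1 := by
      have : g ((1 : S) ⊛ b) = g 1 ⊛ b := hg 1 b
      rw [show ((1 : S) ⊛ b) = b from one_mul b, hact] at this
      exact this
    have hfa : f a = ⟨⟨false⟩, PUnit.unit⟩ := by
      have : ∃ u, a = a * u := ⟨1, (mul_one a).symm⟩
      simp only [hfdef, if_pos this]
    have hfb : f b = ⟨⟨true⟩, PUnit.unit⟩ := by
      have : ¬ ∃ u, b = a * u := by rintro ⟨u, hu⟩; exact hne u 1 (by rw [mul_one, hu])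
      simp only [hfdef, if_neg this]
    have : (⟨⟨false⟩, PUnit.unit⟩ : Θ) = ⟨⟨true⟩, PUnit.unit⟩ := by
      rw [← hfa, ← hfb, ← hgf haC, ← hgf hbC, hga, hgb]
    simp at this
  · -- (ii) ⇐ : left reversible implies coproducts InC-injective
    intro hrev I _ A _ hA B _ hBind C hC f hf
    classical
    obtain ⟨c₀, hc₀⟩ := hC.1
    set i₀ : I := (f c₀).1 with hi₀
    have hfix : ∀ c ∈ C, (f c).1 = i₀ := by
      intro c hc
      obtain ⟨s, t, hst⟩ := indecomposable_common S hrev B hBind c c₀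
      have h1 : f (c ⊛ s) = f c ⊛ s := hf c hc s
      have h2 : f (c₀ ⊛ t) = f c₀ ⊛ t := hf c₀ hc₀ t
      have : (f c ⊛ s).1 = (f c₀ ⊛ t).1 := by rw [← h1, ← h2, hst]
      exact this
    have hne : Nonempty (A i₀) := RightAct.nonempty (S := S)
    set f' : B → A i₀ := fun x => if h : (f x).1 = i₀ then h ▸ (f x).2
      else Classical.choice hne with hf'def
    have hf'C : IsActHomOn S f' C := by
      intro c hc s
      have h1 : (f c).1 = i₀ := hfix c hc
      have h2 : f (c ⊛ s) = f c ⊛ s := hf c hc s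
      have h3 : (f (c ⊛ s)).1 = i₀ := hfix (c ⊛ s) (hC.2 c hc s)
      simp only [hf'def, dif_pos h1, dif_pos h3]
      exact sigma_act_cast (f c) (f (c ⊛ s)) s h2 h1 h3
    obtain ⟨g', hg', hg'f'⟩ := hA i₀ B hBind C hC f' hf'C
    refine ⟨fun x => ⟨i₀, g' x⟩, fun x s => ?_, fun c hc => ?_⟩
    · show (⟨i₀, g' (x ⊛ s)⟩ : Σ i, A i) = ⟨i₀, g' x ⊛ s⟩
      rw [hg']
    · show (⟨i₀, g' c⟩ : Σ i, A i) = f c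
      rw [hg'f' hc]
      have h1 : (f c).1 = i₀ := hfix c hc
      simp only [hf'def, dif_pos h1]
      exact sigma_eta (f c) h1
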